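/- arXiv:2311.00625 — 6 statements merged into one kernel-verified Lean document; each statement's English description precedes it below -/
import Mathlib

section
/- Let r ≥ 1 and let A and C be r×r real symmetric positive definite matrices such that the r eigenvalues of the product AC are pairwise distinct. Let Λ = diag(λ₁,…,λ_r) be the diagonal matrix of these eigenvalues in descending order and let P be an invertible r×r real matrix whose k-th column is an eigenvector of AC associated with λ_k, so that AC·P = P·Λ. Then U := P⁻¹AP⁻ᵀ and V := PᵀCP are invertible diagonal matrices, and U·V = Λ. -/
open Matrix

/-- **Lemma 2.1 (Jiang–Uematsu–Yamagata).**
Let `A` and `C` be `r × r` real symmetric positive definite matrices such that the `r`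
eigenvalues of `A * C` are pairwise distinct.  Let `Λ = diagonal lam` be the diagonal matrix
of these eigenvalues in (strictly) descending order and let `P` be an invertible matrix of
associated eigenvectors, so that `A * C * P = P * Λ`.  Then `U := P⁻¹ * A * P⁻ᵀ` and
`V := Pᵀ * C * P` are invertible diagonal matrices and `U * V = Λ`. -/
theorem pc_rotation_UV_diagonal
    (r : ℕ) (hr : 1 ≤ r)
    (A C P : Matrix (Fin r) (Fin r) ℝ)
    (hA : A.PosDef) (hC : C.PosDef)
    (lam : Fin r → ℝ) (hlam : StrictAnti lam)
    (hP : IsUnit P.det)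
    (heig : A * C * P = P * Matrix.diagonal lam) :
    (∃ u : Fin r → ℝ, (∀ k, u k ≠ 0) ∧ P⁻¹ * A * (P⁻¹)ᵀ = Matrix.diagonal u) ∧
    (∃ v : Fin r → ℝ, (∀ k, v k ≠ 0) ∧ Pᵀ * C * P = Matrix.diagonal v) ∧
    (P⁻¹ * A * (P⁻¹)ᵀ) * (Pᵀ * C * P) = Matrix.diagonal lam := by
  set U := P⁻¹ * A * (P⁻¹)ᵀ with hU
  set V := Pᵀ * C * P with hV
  have hPP : P * P⁻¹ = 1 := mul_nonsing_inv P hP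
  have hPP' : P⁻¹ * P = 1 := nonsing_inv_mul P hP
  have hAt : Aᵀ = A := by
    have := hA.isHermitian.eq
    simpa using this
  have hCt : Cᵀ = C := by
    have := hC.isHermitian.eq
    simpa using this
  -- U * V = Λ
  have hUV : U * V = Matrix.diagonal lam := by
    have hPtPt : (P⁻¹)ᵀ * Pᵀ = 1 := by
      rw [← transpose_mul, hPP, transpose_one]
    calc U * V = P⁻¹ * A * ((P⁻¹)ᵀ * Pᵀ) * C * P := by
          rw [hU, hV]; noncomm_ring
      _ = P⁻¹ * (A * C * P) := by rw [hPtPt]; noncomm_ring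
      _ = P⁻¹ * P * Matrix.diagonal lam := by rw [heig]; noncomm_ring
      _ = Matrix.diagonal lam := by rw [hPP', one_mul]
  -- symmetry
  have hUt : Uᵀ = U := by
    rw [hU, transpose_mul, transpose_mul, transpose_transpose, hAt]; noncomm_ring
  have hVt : Vᵀ = V := by
    rw [hV, transpose_mul, transpose_mul, transpose_transpose, hCt]; noncomm_ring
  have hVU : V * U = Matrix.diagonal lam := by
    have : (U * V)ᵀ = (Matrix.diagonal lam)ᵀ := by rw [hUV]
    rwa [transpose_mul, hUt, hVt, diagonal_transpose] at this
  -- invertibility of U and V ⇒ lam k ≠ 0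
  have hdetA : A.det ≠ 0 := hA.det_pos.ne'
  have hdetC : C.det ≠ 0 := hC.det_pos.ne'
  have hdetP : P.det ≠ 0 := by
    intro h; rw [h] at hP; exact hP.ne_zero rfl
  have hdetU : U.det ≠ 0 := by
    rw [hU, det_mul, det_mul, det_transpose, det_nonsing_inv]
    simp [Ring.inverse_eq_inv', hdetA, hdetP]
  have hdetV : V.det ≠ 0 := by
    rw [hV, det_mul, det_mul, det_transpose]
    simp [hdetP, hdetC]
  have hlamne : ∀ k, lam k ≠ 0 := by
    intro k hk
    have : (Matrix.diagonal lam).det ≠ 0 := by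
      rw [← hUV, det_mul]; exact mul_ne_zero hdetU hdetV
    rw [det_diagonal] at this
    exact this (Finset.prod_eq_zero (Finset.mem_univ k) hk)
  -- diagonality of V
  have hlaminj : Function.Injective lam := hlam.injective
  have hoffV : ∀ i j, i ≠ j → V i j = 0 := by
    intro i j hij
    have hcomm : V * Matrix.diagonal lam = Matrix.diagonal lam * V := by
      calc V * Matrix.diagonal lam = V * (U * V) := by rw [hUV]
        _ = (V * U) * V := by noncomm_ring
        _ = Matrix.diagonal lam * V := by rw [hVU]
    have := congrFun (congrFun hcomm i) j
    rw [mul_diagonal, diagonal_mul] at this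
    have hne : lam j ≠ lam i := fun h => hij (hlaminj h).symm
    have : V i j * (lam j - lam i) = 0 := by ring_nf; linarith [this]
    rcases mul_eq_zero.mp this with h | h
    · exact h
    · exact absurd (by linarith : lam j = lam i) hne
  have hoffU : ∀ i j, i ≠ j → U i j = 0 := by
    intro i j hij
    have hcomm : U * Matrix.diagonal lam = Matrix.diagonal lam * U := by
      calc U * Matrix.diagonal lam = U * (V * U) := by rw [hVU]
        _ = (U * V) * U := by noncomm_ring
        _ = Matrix.diagonal lam * U := by rw [hUV]
    have := congrFun (congrFun hcomm i) j
    rw [mul_diagonal, diagonal_mul] at this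
    have hne : lam j ≠ lam i := fun h => hij (hlaminj h).symm
    have : U i j * (lam j - lam i) = 0 := by ring_nf; linarith [this]
    rcases mul_eq_zero.mp this with h | h
    · exact h
    · exact absurd (by linarith : lam j = lam i) hne
  have hUdiag : U = Matrix.diagonal (fun k => U k k) := by
    ext i j
    by_cases h : i = j
    · subst h; simp [diagonal_apply_eq]
    · rw [diagonal_apply_ne _ h]; exact hoffU i j h
  have hVdiag : V = Matrix.diagonal (fun k => V k k) := by
    ext i j
    by_cases h : i = j
    · subst h; simp [diagonal_apply_eq]
    · rw [diagonal_apply_ne _ h]; exact hoffV i j h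
  have hprod : ∀ k, U k k * V k k = lam k := by
    intro k
    have := congrFun (congrFun hUV k) k
    rw [hUdiag, hVdiag] at this ⊢
    · simpa [diagonal_mul_diagonal] using this
  refine ⟨⟨fun k => U k k, fun k hk => hlamne k (by have hk' : U k k = 0 := hk; rw [← hprod k, hk', zero_mul]), hUdiag⟩,
    ⟨fun k => V k k, fun k hk => hlamne k (by have hk' : V k k = 0 := hk; rw [← hprod k, hk', mul_zero]), hVdiag⟩, hUV⟩
end

section
/- Let F ∈ ℝ^{T×r} and B ∈ ℝ^{N×r} be real matrices such that T⁻¹FᵀF and BᵀB are symmetric positive definite and the r eigenvalues λ₁ > λ₂ > … > λ_r > 0 of BᵀB(T⁻¹FᵀF) are pairwise distinct. Let P be an invertible r×r matrix of corresponding eigenvectors, i.e. BᵀB(T⁻¹FᵀF)P = PΛ with Λ = diag(λ₁,…,λ_r), and let V := Pᵀ(T⁻¹FᵀF)P, which is diagonal with positive diagonal entries. Then the matrix H := P·V^{-1/2} is invertible, and the rotated matrices F⁰ := FH and B⁰ := BH⁻ᵀ satisfy T⁻¹F⁰ᵀF⁰ = I_r and B⁰ᵀB⁰ = Λ; in particular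 B⁰ᵀB⁰ is diagonal with strictly decreasing positive diagonal entries, and F⁰B⁰ᵀ = FBᵀ. -/
open Matrix

/-- **Theorem 2.1 (existence part).**
Let `F ∈ ℝ^{T×r}` and `B ∈ ℝ^{N×r}` with `T⁻¹FᵀF` and `BᵀB` symmetric positive definite and
the eigenvalues `lam 0 > lam 1 > … > 0` of `BᵀB (T⁻¹FᵀF)` pairwise distinct.  Let `P` be an
invertible eigenvector matrix, `BᵀB (T⁻¹FᵀF) P = P Λ`, and `V := Pᵀ (T⁻¹FᵀF) P = diagonal v`
(with `v` positive, by Lemma 2.1).  Then `H := P * V^{-1/2}` is invertible and the rotated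
matrices `F⁰ := F * H`, `B⁰ := B * H⁻ᵀ` satisfy `T⁻¹F⁰ᵀF⁰ = I`, `B⁰ᵀB⁰ = Λ` (diagonal with
strictly decreasing positive entries) and `F⁰B⁰ᵀ = FBᵀ`. -/
theorem pc_rotation_exists
    (T N r : ℕ) (hT : 0 < T)
    (F : Matrix (Fin T) (Fin r) ℝ) (B : Matrix (Fin N) (Fin r) ℝ)
    (hF : ((T : ℝ)⁻¹ • (Fᵀ * F)).PosDef) (hB : (Bᵀ * B).PosDef)
    (lam : Fin r → ℝ) (hlam : StrictAnti lam) (hlampos : ∀ k, 0 < lam k)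
    (P : Matrix (Fin r) (Fin r) ℝ) (hP : IsUnit P.det)
    (heig : Bᵀ * B * ((T : ℝ)⁻¹ • (Fᵀ * F)) * P = P * Matrix.diagonal lam)
    (v : Fin r → ℝ) (hv : ∀ k, 0 < v k)
    (hV : Pᵀ * ((T : ℝ)⁻¹ • (Fᵀ * F)) * P = Matrix.diagonal v) :
    let H := P * Matrix.diagonal (fun k => (Real.sqrt (v k))⁻¹)
    IsUnit H.det ∧
    (T : ℝ)⁻¹ • ((F * H)ᵀ * (F * H)) = 1 ∧
    (B * (H⁻¹)ᵀ)ᵀ * (B * (H⁻¹)ᵀ) = Matrix.diagonal lam ∧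
    (F * H) * (B * (H⁻¹)ᵀ)ᵀ = F * Bᵀ := by
  intro H
  set A := ((T : ℝ)⁻¹ • (Fᵀ * F)) with hA
  set D := Matrix.diagonal (fun k => (Real.sqrt (v k))⁻¹) with hD
  have hsqrt : ∀ k, (0:ℝ) < Real.sqrt (v k) := fun k => Real.sqrt_pos.2 (hv k)
  have hDdet : IsUnit D.det := by
    rw [hD, Matrix.det_diagonal]
    exact isUnit_iff_ne_zero.2 (Finset.prod_ne_zero_iff.2 fun k _ =>
      inv_ne_zero (ne_of_gt (hsqrt k)))
  have hHdet : IsUnit H.det := by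
    show IsUnit (P * D).det
    rw [Matrix.det_mul]
    exact hP.mul hDdet
  -- Hᵀ A H = 1
  have hHAH : Hᵀ * A * H = 1 := by
    have hDT : Dᵀ = D := by rw [hD, Matrix.diagonal_transpose]
    have e : Hᵀ * A * H = D * (Pᵀ * A * P) * D := by
      show (P * D)ᵀ * A * (P * D) = _
      rw [Matrix.transpose_mul, hDT]
      noncomm_ring
    rw [e, hV, hD, Matrix.diagonal_mul_diagonal, Matrix.diagonal_mul_diagonal,
      ← Matrix.diagonal_one]
    refine congrArg Matrix.diagonal (funext fun k => ?_)
    have h := Real.mul_self_sqrt (hv k).le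
    rw [← h]
    field_simp
    rw [Real.sqrt_sq (hsqrt k).le]
    exact div_self (pow_pos (hsqrt k) 2).ne'
  -- statement 2
  have h2 : (T : ℝ)⁻¹ • ((F * H)ᵀ * (F * H)) = 1 := by
    have e1 : (F * H)ᵀ * (F * H) = Hᵀ * (Fᵀ * F) * H := by
      rw [Matrix.transpose_mul]; simp only [Matrix.mul_assoc]
    have e2 : Hᵀ * A * H = (T : ℝ)⁻¹ • (Hᵀ * (Fᵀ * F) * H) := by
      rw [hA, Matrix.mul_smul, Matrix.smul_mul]
    rw [e1, ← e2, hHAH]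
  -- H⁻¹ = Hᵀ * A
  have hHinv : H⁻¹ = Hᵀ * A := Matrix.inv_eq_left_inv hHAH
  have hAsymm : Aᵀ = A := by
    have := hF.1.eq
    exact (Matrix.conjTranspose_eq_transpose_of_trivial A).symm.trans this
  have hHinvT : (H⁻¹)ᵀ = A * H := by
    rw [hHinv, Matrix.transpose_mul, Matrix.transpose_transpose, hAsymm]
  -- BᵀB A H = H Λ
  have hkey : Bᵀ * B * A * H = H * Matrix.diagonal lam := by
    show Bᵀ * B * A * (P * D) = (P * D) * Matrix.diagonal lam
    rw [← Matrix.mul_assoc, heig, Matrix.mul_assoc, Matrix.mul_assoc, hD,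
      Matrix.diagonal_mul_diagonal, Matrix.diagonal_mul_diagonal]
    exact congrArg (fun M => P * M)
      (congrArg Matrix.diagonal (funext fun k => mul_comm _ _))
  have h3 : (B * (H⁻¹)ᵀ)ᵀ * (B * (H⁻¹)ᵀ) = Matrix.diagonal lam := by
    rw [Matrix.transpose_mul, hHinvT, Matrix.transpose_mul, hAsymm]
    calc Hᵀ * A * Bᵀ * (B * (A * H))
        = Hᵀ * A * (Bᵀ * B * A * H) := by simp only [Matrix.mul_assoc]
      _ = Hᵀ * A * (H * Matrix.diagonal lam) := by rw [hkey]
      _ = (Hᵀ * A * H) * Matrix.diagonal lam := by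
            simp only [Matrix.mul_assoc]
      _ = Matrix.diagonal lam := by rw [hHAH, Matrix.one_mul]
  have h4 : (F * H) * (B * (H⁻¹)ᵀ)ᵀ = F * Bᵀ := by
    rw [Matrix.transpose_mul, Matrix.transpose_transpose, ← Matrix.mul_assoc,
      Matrix.mul_assoc F, Matrix.mul_nonsing_inv _ hHdet, Matrix.mul_one]
  exact ⟨hHdet, h2, h3, h4⟩
end

section
/- Let F ∈ ℝ^{T×r} and B ∈ ℝ^{N×r} with T⁻¹FᵀF and BᵀB symmetric positive definite and the r eigenvalues λ₁ > … > λ_r > 0 of BᵀB(T⁻¹FᵀF) pairwise distinct, and let H = P·V^{-1/2} be the rotation of Theorem 2.1, so that T⁻¹(FH)ᵀ(FH) = I_r and (BH⁻ᵀ)ᵀ(BH⁻ᵀ) = Λ = diag(λ₁,…,λ_r). If H̄ is any invertible r×r real matrix such that T⁻¹(FH̄)ᵀ(FH̄) = I_r and (BH̄⁻ᵀ)ᵀ(BH̄⁻ᵀ) is a diagonal matrix with positive diagonal entries in strictly decreasing order, then H̄ = H·S for some diagonal matrix S each of whose diagonal entries is +1 or −1. -/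
open Matrix

/-- **Theorem 2.1 (uniqueness part).**
With `H = P * V^{-1/2}` the rotation of Theorem 2.1 (so that `T⁻¹(FH)ᵀ(FH) = I` and
`(BH⁻ᵀ)ᵀ(BH⁻ᵀ) = Λ`), any other invertible matrix `Hbar` with `T⁻¹(F Hbar)ᵀ(F Hbar) = I`
and `(B Hbar⁻ᵀ)ᵀ(B Hbar⁻ᵀ)` diagonal with positive strictly decreasing diagonal entries
satisfies `Hbar = H * S` for a diagonal sign matrix `S`. -/
theorem pc_rotation_unique_up_to_sign
    (T N r : ℕ) (hT : 0 < T)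
    (F : Matrix (Fin T) (Fin r) ℝ) (B : Matrix (Fin N) (Fin r) ℝ)
    (hF : ((T : ℝ)⁻¹ • (Fᵀ * F)).PosDef) (hB : (Bᵀ * B).PosDef)
    (lam : Fin r → ℝ) (hlam : StrictAnti lam) (hlampos : ∀ k, 0 < lam k)
    (P : Matrix (Fin r) (Fin r) ℝ) (hP : IsUnit P.det)
    (heig : Bᵀ * B * ((T : ℝ)⁻¹ • (Fᵀ * F)) * P = P * Matrix.diagonal lam)
    (v : Fin r → ℝ) (hv : ∀ k, 0 < v k)
    (hV : Pᵀ * ((T : ℝ)⁻¹ • (Fᵀ * F)) * P = Matrix.diagonal v)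
    -- the reference rotation H and its identifying restrictions
    (H : Matrix (Fin r) (Fin r) ℝ)
    (hH : H = P * Matrix.diagonal (fun k => (Real.sqrt (v k))⁻¹))
    (hHF : (T : ℝ)⁻¹ • ((F * H)ᵀ * (F * H)) = 1)
    (hHB : (B * (H⁻¹)ᵀ)ᵀ * (B * (H⁻¹)ᵀ) = Matrix.diagonal lam)
    -- any other rotation satisfying the r² restrictions
    (Hbar : Matrix (Fin r) (Fin r) ℝ) (hHbar : IsUnit Hbar.det)
    (hbarF : (T : ℝ)⁻¹ • ((F * Hbar)ᵀ * (F * Hbar)) = 1)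
    (μ : Fin r → ℝ) (hμ : StrictAnti μ) (hμpos : ∀ k, 0 < μ k)
    (hbarB : (B * (Hbar⁻¹)ᵀ)ᵀ * (B * (Hbar⁻¹)ᵀ) = Matrix.diagonal μ) :
    ∃ s : Fin r → ℝ, (∀ k, s k = 1 ∨ s k = -1) ∧ Hbar = H * Matrix.diagonal s := by
  set A := (T : ℝ)⁻¹ • (Fᵀ * F) with hA
  have hHAH : Hᵀ * A * H = 1 := by
    calc Hᵀ * A * H = (T : ℝ)⁻¹ • ((F * H)ᵀ * (F * H)) := by
          simp [hA, transpose_mul, Matrix.mul_smul, Matrix.smul_mul, Matrix.mul_assoc]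
    _ = 1 := hHF
  have hBarA : Hbarᵀ * A * Hbar = 1 := by
    calc Hbarᵀ * A * Hbar = (T : ℝ)⁻¹ • ((F * Hbar)ᵀ * (F * Hbar)) := by
          simp [hA, transpose_mul, Matrix.mul_smul, Matrix.smul_mul, Matrix.mul_assoc]
    _ = 1 := hbarF
  have hdet : H.det * A.det * H.det = 1 := by
    have := congrArg Matrix.det hHAH
    simpa [Matrix.det_mul, Matrix.det_transpose, mul_comm] using this
  have hHdet : IsUnit H.det := by
    rw [isUnit_iff_ne_zero]
    intro h; rw [h] at hdet; simp at hdet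
  have hHTdet : IsUnit Hᵀ.det := by simpa [Matrix.det_transpose] using hHdet
  have hAinv : A = (Hᵀ)⁻¹ * H⁻¹ := by
    calc A = ((Hᵀ)⁻¹ * Hᵀ) * A * (H * H⁻¹) := by
          rw [Matrix.nonsing_inv_mul _ hHTdet, Matrix.mul_nonsing_inv _ hHdet,
            Matrix.one_mul, Matrix.mul_one]
    _ = (Hᵀ)⁻¹ * (Hᵀ * A * H) * H⁻¹ := by
          simp only [Matrix.mul_assoc]
    _ = (Hᵀ)⁻¹ * H⁻¹ := by rw [hHAH, Matrix.mul_one]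
  set Q := H⁻¹ * Hbar with hQ
  have hQorth : Qᵀ * Q = 1 := by
    calc Qᵀ * Q = Hbarᵀ * A * Hbar := by
          rw [hAinv]
          simp [hQ, transpose_mul, Matrix.transpose_nonsing_inv, Matrix.mul_assoc]
    _ = 1 := hBarA
  have hQQt : Q * Qᵀ = 1 := mul_eq_one_comm.mp hQorth
  have hHbarQ : Hbar = H * Q := by
    rw [hQ, ← Matrix.mul_assoc, Matrix.mul_nonsing_inv _ hHdet, Matrix.one_mul]
  have hQinv : Q⁻¹ = Qᵀ := Matrix.inv_eq_right_inv hQQt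
  have hbarinv : Hbar⁻¹ = Qᵀ * H⁻¹ := by
    rw [hHbarQ, Matrix.mul_inv_rev, hQinv]
  have hL : H⁻¹ * (Bᵀ * B) * (H⁻¹)ᵀ = Matrix.diagonal lam := by
    rw [← hHB]; simp [transpose_mul, transpose_transpose, Matrix.mul_assoc]
  have hLbar : Hbar⁻¹ * (Bᵀ * B) * (Hbar⁻¹)ᵀ = Matrix.diagonal μ := by
    rw [← hbarB]; simp [transpose_mul, transpose_transpose, Matrix.mul_assoc]
  have h1 : Matrix.diagonal μ = Qᵀ * Matrix.diagonal lam * Q := by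
    calc Matrix.diagonal μ = Hbar⁻¹ * (Bᵀ * B) * (Hbar⁻¹)ᵀ := hLbar.symm
    _ = Qᵀ * (H⁻¹ * (Bᵀ * B) * (H⁻¹)ᵀ) * Q := by
          rw [hbarinv]; simp [transpose_mul, transpose_transpose, Matrix.mul_assoc]
    _ = Qᵀ * Matrix.diagonal lam * Q := by rw [hL]
  have key : Q * Matrix.diagonal μ = Matrix.diagonal lam * Q := by
    rw [h1, show Q * (Qᵀ * Matrix.diagonal lam * Q)
        = Q * Qᵀ * (Matrix.diagonal lam * Q) by simp only [Matrix.mul_assoc],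
      hQQt, Matrix.one_mul]
  have hentry : ∀ i j, Q i j * μ j = lam i * Q i j := by
    intro i j
    have := congrFun (congrFun key i) j
    simpa [Matrix.mul_diagonal, Matrix.diagonal_mul] using this
  have hne : ∀ i j, Q i j ≠ 0 → lam i = μ j := by
    intro i j h
    have h2 : μ j * Q i j = lam i * Q i j := by rw [mul_comm]; exact hentry i j
    exact (mul_right_cancel₀ h h2).symm
  have hcol : ∀ j, ∃ i, Q i j ≠ 0 := by
    intro j
    by_contra h; push_neg at h
    have := congrFun (congrFun hQorth j) j
    simp [Matrix.mul_apply, Matrix.transpose_apply, Matrix.one_apply, h] at this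
  choose σ hσ using hcol
  have hμlam : ∀ j, μ j = lam (σ j) := fun j => (hne _ _ (hσ j)).symm
  have huniq : ∀ i j, Q i j ≠ 0 → i = σ j := by
    intro i j h
    exact hlam.injective ((hne i j h).trans (hμlam j))
  have hσinj : Function.Injective σ := by
    intro j j' h
    exact hμ.injective (by rw [hμlam, hμlam, h])
  have hσsurj : Function.Surjective σ := Finite.injective_iff_surjective.mp hσinj
  have hσmono : StrictMono σ := by
    intro a b hab
    have hlt : lam (σ b) < lam (σ a) := by rw [← hμlam, ← hμlam]; exact hμ hab
    exact hlam.lt_iff_gt.mp hlt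
  have hσid : σ = id := by
    haveI : WellFoundedLT (Fin r) := by infer_instance
    have hr : Set.range σ = Set.range (id : Fin r → Fin r) := by
      rw [Set.range_eq_univ.mpr hσsurj, Set.range_id]
    exact (hσmono.range_inj strictMono_id).mp hr
  have hdiag : ∀ i j, i ≠ j → Q i j = 0 := by
    intro i j hij
    by_contra h
    exact hij (by rw [huniq i j h, hσid]; rfl)
  have hsq : ∀ j, Q j j * Q j j = 1 := by
    intro j
    have := congrFun (congrFun hQorth j) j
    rw [Matrix.mul_apply, Matrix.one_apply_eq, Finset.sum_eq_single j] at this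
    · simpa [Matrix.transpose_apply] using this
    · intro b _ hb; simp [Matrix.transpose_apply, hdiag b j hb]
    · intro habs; simp at habs
  refine ⟨fun j => Q j j, fun k => mul_self_eq_one_iff.mp (hsq k), ?_⟩
  have hQd : Q = Matrix.diagonal fun j => Q j j := by
    ext i j
    by_cases h : i = j
    · subst h; simp
    · simp [Matrix.diagonal_apply_ne _ h, hdiag i j h]
  rw [hHbarQ, ← hQd]
end

section
/- Let F ∈ ℝ^{T×r} and B ∈ ℝ^{N×r} with T⁻¹FᵀF and BᵀB symmetric positive definite and the r eigenvalues λ₁ > … > λ_r > 0 of BᵀB(T⁻¹FᵀF) pairwise distinct. With P an invertible eigenvector matrix satisfying BᵀB(T⁻¹FᵀF)P = PΛ for Λ = diag(λ₁,…,λ_r), V = Pᵀ(T⁻¹FᵀF)P, H = P·V^{-1/2}, and F⁰ = FH, the rotation matrix admits the representation H = BᵀB·(T⁻¹FᵀF⁰)·Λ⁻¹. -/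
open Matrix

/-- **Equation (7) of the paper.**
With `P` an invertible eigenvector matrix of `BᵀB (T⁻¹FᵀF)` (eigenvalues `lam`, strictly
decreasing and positive), `V = Pᵀ (T⁻¹FᵀF) P = diagonal v`, `H = P * V^{-1/2}` and
`F⁰ = F * H`, the rotation matrix admits the representation
`H = BᵀB ⬝ (T⁻¹ Fᵀ F⁰) ⬝ Λ⁻¹`. -/
theorem pc_rotation_representation
    (T N r : ℕ) (hT : 0 < T)
    (F : Matrix (Fin T) (Fin r) ℝ) (B : Matrix (Fin N) (Fin r) ℝ)
    (hF : ((T : ℝ)⁻¹ • (Fᵀ * F)).PosDef) (hB : (Bᵀ * B).PosDef)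
    (lam : Fin r → ℝ) (hlam : StrictAnti lam) (hlampos : ∀ k, 0 < lam k)
    (P : Matrix (Fin r) (Fin r) ℝ) (hP : IsUnit P.det)
    (heig : Bᵀ * B * ((T : ℝ)⁻¹ • (Fᵀ * F)) * P = P * Matrix.diagonal lam)
    (v : Fin r → ℝ) (hv : ∀ k, 0 < v k)
    (hV : Pᵀ * ((T : ℝ)⁻¹ • (Fᵀ * F)) * P = Matrix.diagonal v) :
    let H := P * Matrix.diagonal (fun k => (Real.sqrt (v k))⁻¹)
    H = Bᵀ * B * ((T : ℝ)⁻¹ • (Fᵀ * (F * H))) * (Matrix.diagonal lam)⁻¹ := by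
  intro H
  have hΛ : IsUnit (Matrix.diagonal lam).det := by
    rw [Matrix.det_diagonal]
    exact (Finset.prod_pos (fun k _ => hlampos k)).ne'.isUnit
  have key : Bᵀ * B * ((T : ℝ)⁻¹ • (Fᵀ * F)) * H
      = P * Matrix.diagonal (fun k => (Real.sqrt (v k))⁻¹) * Matrix.diagonal lam := by
    show Bᵀ * B * ((T : ℝ)⁻¹ • (Fᵀ * F)) * (P * _) = _
    rw [← Matrix.mul_assoc, heig, Matrix.mul_assoc, Matrix.mul_assoc,
      Matrix.diagonal_mul_diagonal, Matrix.diagonal_mul_diagonal]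
    simp [mul_comm]
  have hsm : (T : ℝ)⁻¹ • (Fᵀ * (F * H)) = ((T : ℝ)⁻¹ • (Fᵀ * F)) * H := by
    rw [← Matrix.mul_assoc, Matrix.smul_mul]
  rw [hsm, ← Matrix.mul_assoc, key, Matrix.mul_assoc,
    Matrix.mul_nonsing_inv _ hΛ, Matrix.mul_one]
end

section
/- Let F⁰ ∈ ℝ^{T×r}, B⁰ ∈ ℝ^{N×r}, E ∈ ℝ^{T×N} and set X = F⁰B⁰ᵀ + E. Let F̂ ∈ ℝ^{T×r} with T⁻¹F̂ᵀF̂ = I_r and let Λ̂ be an invertible r×r diagonal matrix such that T⁻¹XXᵀF̂ = F̂Λ̂, and define B̂ = T⁻¹XᵀF̂. Then: (0) B̂ᵀB̂ = Λ̂; (i) with H̃₄ := B⁰ᵀB̂Λ̂⁻¹ and H̃ := B⁰ᵀB⁰(T⁻¹F⁰ᵀF̂)Λ̂⁻¹, one has H̃₄ − H̃ = T⁻¹B⁰ᵀEᵀF̂Λ̂⁻¹; (ii) if in addition T⁻¹F⁰ᵀF⁰ = I_r, then with H̃₂ := T⁻¹F⁰ᵀF̂ one has H̃₂ − H̃₄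 = T⁻¹F⁰ᵀEB̂Λ̂⁻¹. -/
open Matrix

/-- **Lemma B.4(i)–(ii) of the paper (with the normalization `B̂ᵀB̂ = Λ̂`).**
Let `X = F⁰B⁰ᵀ + E`, let `F̂` satisfy `T⁻¹F̂ᵀF̂ = I` and the eigen-equation
`(T⁻¹XXᵀ)F̂ = F̂Λ̂` with `Λ̂ = diagonal l` invertible, and put `B̂ = T⁻¹XᵀF̂`.  Then
`B̂ᵀB̂ = Λ̂`; with `H̃₄ = B⁰ᵀB̂Λ̂⁻¹` and `H̃ = B⁰ᵀB⁰(T⁻¹F⁰ᵀF̂)Λ̂⁻¹` one has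
`H̃₄ − H̃ = T⁻¹B⁰ᵀEᵀF̂Λ̂⁻¹`; and if moreover `T⁻¹F⁰ᵀF⁰ = I` then, with `H̃₂ = T⁻¹F⁰ᵀF̂`,
`H̃₂ − H̃₄ = T⁻¹F⁰ᵀEB̂Λ̂⁻¹`. -/
theorem rotation_identities_I_II
    (T N r : ℕ) (hT : 0 < T)
    (F0 : Matrix (Fin T) (Fin r) ℝ) (B0 : Matrix (Fin N) (Fin r) ℝ)
    (E : Matrix (Fin T) (Fin N) ℝ)
    (X : Matrix (Fin T) (Fin N) ℝ) (hX : X = F0 * B0ᵀ + E)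
    (Fhat : Matrix (Fin T) (Fin r) ℝ)
    (hFhat : (T : ℝ)⁻¹ • (Fhatᵀ * Fhat) = 1)
    (l : Fin r → ℝ) (hl : ∀ k, l k ≠ 0)
    (heig : ((T : ℝ)⁻¹ • (X * Xᵀ)) * Fhat = Fhat * Matrix.diagonal l)
    (Bhat : Matrix (Fin N) (Fin r) ℝ)
    (hBhat : Bhat = (T : ℝ)⁻¹ • (Xᵀ * Fhat)) :
    -- (0)
    Bhatᵀ * Bhat = Matrix.diagonal l ∧
    -- (i)  H̃₄ − H̃ = T⁻¹ B⁰ᵀEᵀF̂ Λ̂⁻¹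
    (B0ᵀ * Bhat * (Matrix.diagonal l)⁻¹
        - B0ᵀ * B0 * ((T : ℝ)⁻¹ • (F0ᵀ * Fhat)) * (Matrix.diagonal l)⁻¹
      = ((T : ℝ)⁻¹ • (B0ᵀ * Eᵀ * Fhat)) * (Matrix.diagonal l)⁻¹) ∧
    -- (ii)  if T⁻¹F⁰ᵀF⁰ = I then H̃₂ − H̃₄ = T⁻¹ F⁰ᵀEB̂ Λ̂⁻¹
    (((T : ℝ)⁻¹ • (F0ᵀ * F0) = (1 : Matrix (Fin r) (Fin r) ℝ)) →
      (T : ℝ)⁻¹ • (F0ᵀ * Fhat) - B0ᵀ * Bhat * (Matrix.diagonal l)⁻¹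
        = ((T : ℝ)⁻¹ • (F0ᵀ * E * Bhat)) * (Matrix.diagonal l)⁻¹) := by
  have hD : Matrix.diagonal l * (Matrix.diagonal l)⁻¹ = 1 := by
    apply Matrix.mul_nonsing_inv
    simp [Matrix.det_diagonal, Finset.prod_ne_zero_iff, hl]
  have h0 : Bhatᵀ * Bhat = Matrix.diagonal l := by
    have h1 : Bhatᵀ * Bhat
        = (T : ℝ)⁻¹ • (Fhatᵀ * (((T : ℝ)⁻¹ • (X * Xᵀ)) * Fhat)) := by
      rw [hBhat]
      simp [Matrix.transpose_smul, Matrix.transpose_mul, Matrix.smul_mul,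
        Matrix.mul_smul, Matrix.mul_assoc, smul_smul, mul_comm]
    rw [h1, heig, ← Matrix.mul_assoc, ← Matrix.smul_mul, hFhat, Matrix.one_mul]
  refine ⟨h0, ?_, ?_⟩
  · have hB0B : B0ᵀ * Bhat
        = B0ᵀ * B0 * ((T : ℝ)⁻¹ • (F0ᵀ * Fhat)) + (T : ℝ)⁻¹ • (B0ᵀ * Eᵀ * Fhat) := by
      rw [hBhat, hX]
      simp [Matrix.transpose_add, Matrix.transpose_mul, Matrix.transpose_transpose,
        Matrix.add_mul, Matrix.mul_add, Matrix.mul_smul, Matrix.smul_mul,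
        Matrix.mul_assoc, smul_add]
    rw [hB0B, Matrix.add_mul, add_sub_cancel_left]
  · intro hF0
    have key : ((T : ℝ)⁻¹ • (F0ᵀ * Fhat)) * Matrix.diagonal l
        = B0ᵀ * Bhat + (T : ℝ)⁻¹ • (F0ᵀ * E * Bhat) := by
      have h2 : ((T : ℝ)⁻¹ • (F0ᵀ * Fhat)) * Matrix.diagonal l
          = (T : ℝ)⁻¹ • (F0ᵀ * (((T : ℝ)⁻¹ • (X * Xᵀ)) * Fhat)) := by
        rw [heig]
        simp [Matrix.smul_mul, Matrix.mul_assoc]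
      rw [h2]
      have h3 : F0ᵀ * (((T : ℝ)⁻¹ • (X * Xᵀ)) * Fhat) = F0ᵀ * X * Bhat := by
        rw [hBhat]
        simp [Matrix.mul_smul, Matrix.smul_mul, Matrix.mul_assoc]
      rw [h3, hX]
      have h4 : F0ᵀ * (F0 * B0ᵀ + E) * Bhat
          = F0ᵀ * F0 * (B0ᵀ * Bhat) + F0ᵀ * E * Bhat := by
        simp [Matrix.mul_add, Matrix.add_mul, Matrix.mul_assoc]
      rw [h4, smul_add]
      congr 1
      calc (T : ℝ)⁻¹ • (F0ᵀ * F0 * (B0ᵀ * Bhat))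
          = ((T : ℝ)⁻¹ • (F0ᵀ * F0)) * (B0ᵀ * Bhat) := (Matrix.smul_mul _ _ _).symm
        _ = B0ᵀ * Bhat := by rw [hF0, Matrix.one_mul]
    have : (T : ℝ)⁻¹ • (F0ᵀ * Fhat)
        = (B0ᵀ * Bhat + (T : ℝ)⁻¹ • (F0ᵀ * E * Bhat)) * (Matrix.diagonal l)⁻¹ := by
      rw [← key, Matrix.mul_assoc, hD, Matrix.mul_one]
    rw [this, Matrix.add_mul, add_sub_cancel_left]
end

section
/- Let F⁰ ∈ ℝ^{T×r}, B⁰ ∈ ℝ^{N×r}, E ∈ ℝ^{T×N} and set X = F⁰B⁰ᵀ + E, and define B̂ = T⁻¹XᵀF̂ for a matrix F̂ ∈ ℝ^{T×r}. Write H̃₂ := T⁻¹F⁰ᵀF̂. Then: (v) if B⁰ᵀB⁰ and B̂ᵀB⁰ are invertible, the matrix H̃₁ := (B⁰ᵀB⁰)(B̂ᵀB⁰)⁻¹ is invertible and H̃₁⁻ᵀ − H̃₂ = (B⁰ᵀB⁰)⁻¹·T⁻¹B⁰ᵀEᵀF̂; (vi) if B̂ᵀB̂ and B̂ᵀB⁰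 are invertible, the matrix H̃₄ := (B⁰ᵀB̂)(B̂ᵀB̂)⁻¹ is invertible and H̃₄⁻ᵀ − H̃₂ = (B̂ᵀB⁰)⁻¹·T⁻¹B̂ᵀEᵀF̂. -/
open Matrix

/-- **Lemma B.4(v)–(vi) of the paper.**
Let `X = F⁰B⁰ᵀ + E` and `B̂ = T⁻¹XᵀF̂`, and write `H̃₂ = T⁻¹F⁰ᵀF̂`.  Then:
(v) if `B⁰ᵀB⁰` and `B̂ᵀB⁰` are invertible, `H̃₁ := (B⁰ᵀB⁰)(B̂ᵀB⁰)⁻¹` is invertible and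
`H̃₁⁻ᵀ − H̃₂ = (B⁰ᵀB⁰)⁻¹ ⬝ T⁻¹B⁰ᵀEᵀF̂`;
(vi) if `B̂ᵀB̂` and `B̂ᵀB⁰` are invertible, `H̃₄ := (B⁰ᵀB̂)(B̂ᵀB̂)⁻¹` is invertible and
`H̃₄⁻ᵀ − H̃₂ = (B̂ᵀB⁰)⁻¹ ⬝ T⁻¹B̂ᵀEᵀF̂`. -/
theorem rotation_identities_V_VI
    (T N r : ℕ) (hT : 0 < T)
    (F0 : Matrix (Fin T) (Fin r) ℝ) (B0 : Matrix (Fin N) (Fin r) ℝ)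
    (E : Matrix (Fin T) (Fin N) ℝ)
    (X : Matrix (Fin T) (Fin N) ℝ) (hX : X = F0 * B0ᵀ + E)
    (Fhat : Matrix (Fin T) (Fin r) ℝ)
    (Bhat : Matrix (Fin N) (Fin r) ℝ)
    (hBhat : Bhat = (T : ℝ)⁻¹ • (Xᵀ * Fhat)) :
    -- (v)
    (IsUnit (B0ᵀ * B0).det → IsUnit (Bhatᵀ * B0).det →
      IsUnit ((B0ᵀ * B0) * (Bhatᵀ * B0)⁻¹).det ∧
      ((((B0ᵀ * B0) * (Bhatᵀ * B0)⁻¹)⁻¹)ᵀ - (T : ℝ)⁻¹ • (F0ᵀ * Fhat)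
        = (B0ᵀ * B0)⁻¹ * ((T : ℝ)⁻¹ • (B0ᵀ * Eᵀ * Fhat)))) ∧
    -- (vi)
    (IsUnit (Bhatᵀ * Bhat).det → IsUnit (Bhatᵀ * B0).det →
      IsUnit ((B0ᵀ * Bhat) * (Bhatᵀ * Bhat)⁻¹).det ∧
      ((((B0ᵀ * Bhat) * (Bhatᵀ * Bhat)⁻¹)⁻¹)ᵀ - (T : ℝ)⁻¹ • (F0ᵀ * Fhat)
        = (Bhatᵀ * B0)⁻¹ * ((T : ℝ)⁻¹ • (Bhatᵀ * Eᵀ * Fhat)))) := by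
  have key : ∀ C : Matrix (Fin N) (Fin r) ℝ, Cᵀ * Bhat
      = (Cᵀ * B0) * ((T : ℝ)⁻¹ • (F0ᵀ * Fhat)) + ((T : ℝ)⁻¹ • (Cᵀ * Eᵀ * Fhat)) := by
    intro C
    subst hX hBhat
    rw [Matrix.mul_smul, Matrix.transpose_add, Matrix.transpose_mul,
      Matrix.transpose_transpose, Matrix.mul_smul, ← smul_add, Matrix.add_mul,
      Matrix.mul_add]
    simp [Matrix.mul_assoc]
  constructor
  · intro h1 h2
    refine ⟨by rw [Matrix.det_mul]; exact h1.mul (Matrix.isUnit_nonsing_inv_det _ h2), ?_⟩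
    rw [Matrix.mul_inv_rev, Matrix.nonsing_inv_nonsing_inv _ h2]
    simp only [Matrix.transpose_mul, Matrix.transpose_nonsing_inv, Matrix.transpose_transpose]
    rw [key B0, Matrix.mul_add, ← Matrix.mul_assoc, Matrix.nonsing_inv_mul _ h1,
      Matrix.one_mul, add_sub_cancel_left]
  · intro h1 h2
    have h2' : IsUnit (B0ᵀ * Bhat).det := by
      have : B0ᵀ * Bhat = (Bhatᵀ * B0)ᵀ := by
        rw [Matrix.transpose_mul, Matrix.transpose_transpose]
      rw [this, Matrix.det_transpose]; exact h2
    refine ⟨by rw [Matrix.det_mul]; exact h2'.mul (Matrix.isUnit_nonsing_inv_det _ h1), ?_⟩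
    rw [Matrix.mul_inv_rev, Matrix.nonsing_inv_nonsing_inv _ h1]
    simp only [Matrix.transpose_mul, Matrix.transpose_nonsing_inv, Matrix.transpose_transpose]
    rw [key Bhat, Matrix.mul_add, ← Matrix.mul_assoc, Matrix.nonsing_inv_mul _ h2,
      Matrix.one_mul, add_sub_cancel_left]
end
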